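/- Under Assumption 1, if P(Sⁱ = ∞) > 0 then P(S₊ⁱ = ∞ | Sⁱ = ∞) = 1 and P(S₋ⁱ = ∞ | Sⁱ = ∞) = 1; equivalently, P(Sⁱ = ∞, S₊ⁱ < ∞) = 0 and P(Sⁱ = ∞, S₋ⁱ < ∞) = 0. -/

import Mathlib

open MeasureTheory Filter Set ENNReal

noncomputable section

/-- The cluster `C(ω) = {t : I_t(ω) = 1}` of a binary process. -/
def clusterSet {Ω : Type*} (I : ℤ → Ω → Bool) (ω : Ω) : Set ℤ :=
  {t : ℤ | I t ω = true}

/-- Inspected cluster size `Sⁱ(ω) = Σ_{t ∈ ℤ} I_t(ω) ∈ ℕ ∪ {∞}`. -/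
def SiFn {Ω : Type*} (I : ℤ → Ω → Bool) (ω : Ω) : ℕ∞ :=
  {t : ℤ | I t ω = true}.encard

/-- Forward inspected cluster size `S₊ⁱ(ω) = Σ_{t ≥ 1} I_t(ω) ∈ ℕ₀ ∪ {∞}`. -/
def SplusFn {Ω : Type*} (I : ℤ → Ω → Bool) (ω : Ω) : ℕ∞ :=
  {t : ℤ | 0 < t ∧ I t ω = true}.encard

/-- Backward inspected cluster size `S₋ⁱ(ω) = Σ_{t ≤ -1} I_t(ω) ∈ ℕ₀ ∪ {∞}`. -/
def SminusFn {Ω : Type*} (I : ℤ → Ω → Bool) (ω : Ω) : ℕ∞ :=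
  {t : ℤ | t < 0 ∧ I t ω = true}.encard


namespace InfClusterAux

abbrev Path : Type := ℤ → Bool

def patCyl (F : Finset ℤ) (ε : ℤ → Bool) : Set Path := {f | ∀ t ∈ F, f t = ε t}

def Cyls : Set (Set Path) := {s | ∃ F ε, s = patCyl F ε}

lemma measurableSet_coord (t : ℤ) (b : Bool) : MeasurableSet {f : Path | f t = b} := by
  have : {f : Path | f t = b} = (fun f : Path => f t) ⁻¹' {b} := rfl
  rw [this]
  exact (measurable_pi_apply t) (measurableSet_singleton b)

lemma measurableSet_patCyl (F : Finset ℤ) (ε : ℤ → Bool) : MeasurableSet (patCyl F ε) := by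
  have h : patCyl F ε = ⋂ t ∈ F, {f : Path | f t = ε t} := by
    ext f; simp [patCyl]
  rw [h]
  exact MeasurableSet.biInter F.countable_toSet fun t _ => measurableSet_coord t (ε t)

lemma isPiSystem_Cyls : IsPiSystem Cyls := by
  rintro s ⟨F, ε, rfl⟩ t ⟨G, η, rfl⟩ hne
  obtain ⟨f0, hf0F, hf0G⟩ := hne
  refine ⟨F ∪ G, fun x => if x ∈ F then ε x else η x, ?_⟩
  ext f
  simp only [patCyl, mem_inter_iff, mem_setOf_eq, Finset.mem_union]
  constructor
  · rintro ⟨h1, h2⟩ x hx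
    by_cases hxF : x ∈ F
    · simp [hxF, h1 x hxF]
    · simp only [hxF, if_false]
      exact h2 x (hx.resolve_left hxF)
  · intro h
    constructor
    · intro x hxF
      have := h x (Or.inl hxF); simpa [hxF] using this
    · intro x hxG
      by_cases hxF : x ∈ F
      · have hc : ε x = η x := by
          rw [← hf0F x hxF, hf0G x hxG]
        have := h x (Or.inl hxF); simp [hxF] at this
        rw [this, hc]
      · have := h x (Or.inr hxG); simpa [hxF] using this

lemma generateFrom_Cyls : (inferInstance : MeasurableSpace Path) = .generateFrom Cyls := by
  refine le_antisymm ?_ ?_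
  · have heval : ∀ a : ℤ, @Measurable Path Bool (.generateFrom Cyls) _ (fun f => f a) := by
      intro a
      refine @measurable_to_countable Bool Path _ _ (.generateFrom Cyls) _ ?_
      intro f
      apply MeasurableSpace.measurableSet_generateFrom
      exact ⟨{a}, fun _ => f a, by ext g; simp [patCyl]⟩
    have hid : @Measurable Path Path (.generateFrom Cyls) MeasurableSpace.pi id :=
      (@measurable_pi_iff Path ℤ (fun _ => Bool) (.generateFrom Cyls) _ id).mpr heval
    intro s hs
    exact hid hs
  · rw [MeasurableSpace.generateFrom_le_iff]
    rintro s ⟨F, ε, rfl⟩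
    exact measurableSet_patCyl F ε

/-- forward shift by `k`: `(shiftk k f) t = f (t - k)`. -/
def shiftk (k : ℤ) (f : Path) : Path := fun t => f (t - k)

lemma measurable_shiftk (k : ℤ) : Measurable (shiftk k) :=
  measurable_pi_lambda _ fun t => measurable_pi_apply (t - k)

lemma measurableSet_finiteOn (p : ℤ → Prop) :
    MeasurableSet {f : Path | {t | p t ∧ f t = true}.Finite} := by
  have h : {f : Path | {t | p t ∧ f t = true}.Finite}
      = ⋃ (F : Finset ℤ), ⋂ (t : ℤ), ⋂ (_ : p t ∧ t ∉ F), {f : Path | f t = false} := by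
    ext f
    simp only [mem_setOf_eq, mem_iUnion, mem_iInter]
    constructor
    · intro hf
      refine ⟨hf.toFinset, fun t ht => ?_⟩
      have h1 : t ∉ {t | p t ∧ f t = true} := fun hmem => ht.2 (hf.mem_toFinset.mpr hmem)
      simp only [mem_setOf_eq, not_and] at h1
      rcases Bool.dichotomy (f t) with hb | hb
      · exact hb
      · exact absurd hb (h1 ht.1)
    · rintro ⟨F, hF⟩
      refine Set.Finite.subset F.finite_toSet fun t ht => ?_
      by_contra htF
      have := hF t ⟨ht.1, htF⟩
      rw [ht.2] at this
      exact Bool.true_eq_false.mp this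
  rw [h]
  exact MeasurableSet.iUnion fun F =>
    MeasurableSet.iInter fun t => MeasurableSet.iInter fun _ => measurableSet_coord t false

def Einf : Set Path := {f | {t | f t = true}.Infinite}

lemma measurableSet_Einf : MeasurableSet Einf := by
  have h1 : MeasurableSet {f : Path | {t | f t = true}.Finite} := by
    have : {f : Path | {t | f t = true}.Finite}
        = {f : Path | {t | True ∧ f t = true}.Finite} := by
      ext f; simp
    rw [this]; exact measurableSet_finiteOn _
  have : Einf = {f : Path | {t | f t = true}.Finite}ᶜ := by
    ext f; exact Iff.rfl
  rw [this]; exact h1.compl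


lemma pat_insert {Ω : Type*} (I : ℤ → Ω → Bool) (F : Finset ℤ) (ε : ℤ → Bool) (k : ℤ)
    (hk : k ∈ F → ε k = true) :
    {ω | (∀ t ∈ F, I t ω = ε t) ∧ I k ω = true}
      = {ω | ∀ t ∈ insert k F, I t ω = Function.update ε k true t} := by
  ext ω
  simp only [Set.mem_setOf_eq, Finset.mem_insert]
  constructor
  · rintro ⟨h1, h2⟩ t ht
    rcases eq_or_ne t k with rfl | hne
    · simpa using h2
    · rw [Function.update_of_ne hne]
      exact h1 t (ht.resolve_left hne)
  · intro h
    refine ⟨fun t ht => ?_, ?_⟩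
    · rcases eq_or_ne t k with rfl | hne
      · have := h t (Or.inl rfl)
        simp only [Function.update_self] at this
        rw [this, hk ht]
      · have := h t (Or.inr ht)
        rwa [Function.update_of_ne hne] at this
    · have := h k (Or.inl rfl)
      simpa using this

lemma P0_eq_one
    {Ω : Type*} [MeasurableSpace Ω] (P : Measure Ω)
    (I : ℤ → Ω → Bool)
    {Ωn : ℕ → Type*} [∀ n, MeasurableSpace (Ωn n)]
    (Pn : ∀ n, Measure (Ωn n)) (hPn : ∀ n, IsProbabilityMeasure (Pn n))
    (In : ∀ n, ℤ → Ωn n → Bool)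
    (hpos : ∀ n, 0 < Pn n {ω | In n 0 ω = true})
    (hconv : ∀ (F : Finset ℤ) (ε : ℤ → Bool),
      Tendsto (fun n =>
          Pn n ({ω | ∀ t ∈ F, In n t ω = ε t} ∩ {ω | In n 0 ω = true})
            / Pn n {ω | In n 0 ω = true}) atTop
        (nhds (P {ω | ∀ t ∈ F, I t ω = ε t}))) :
    P {ω | I 0 ω = true} = 1 := by
  have h := hconv {0} (fun _ => true)
  have hne : ∀ n, (Pn n ({ω | ∀ t ∈ ({0} : Finset ℤ), In n t ω = true}
      ∩ {ω | In n 0 ω = true}) / Pn n {ω | In n 0 ω = true}) = 1 := by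
    intro n
    haveI := hPn n
    have hs : {ω | ∀ t ∈ ({0} : Finset ℤ), In n t ω = true} = {ω | In n 0 ω = true} := by
      ext ω; simp
    rw [hs, Set.inter_self, ENNReal.div_self (hpos n).ne' (measure_ne_top _ _)]
  have h1 : Tendsto (fun _ : ℕ => (1 : ℝ≥0∞)) atTop
      (nhds (P {ω | ∀ t ∈ ({0} : Finset ℤ), I t ω = true})) := by
    refine Tendsto.congr (fun n => hne n) h
  have := tendsto_nhds_unique h1 tendsto_const_nhds
  have hs : {ω | ∀ t ∈ ({0} : Finset ℤ), I t ω = (fun _ => true) t} = {ω | I 0 ω = true} := by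
    ext ω; simp
  rwa [hs] at this

lemma time_change
    {Ω : Type*} [MeasurableSpace Ω] (P : Measure Ω) [IsProbabilityMeasure P]
    (I : ℤ → Ω → Bool) (hI : ∀ t, Measurable (I t))
    {Ωn : ℕ → Type*} [∀ n, MeasurableSpace (Ωn n)]
    (Pn : ∀ n, Measure (Ωn n)) (hPn : ∀ n, IsProbabilityMeasure (Pn n))
    (In : ∀ n, ℤ → Ωn n → Bool)
    (hpos : ∀ n, 0 < Pn n {ω | In n 0 ω = true})
    (hstat : ∀ n (F : Finset ℤ) (ε : ℤ → Bool) (k : ℤ),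
      Pn n {ω | ∀ t ∈ F, In n t ω = ε t} = Pn n {ω | ∀ t ∈ F, In n (t + k) ω = ε t})
    (hconv : ∀ (F : Finset ℤ) (ε : ℤ → Bool),
      Tendsto (fun n =>
          Pn n ({ω | ∀ t ∈ F, In n t ω = ε t} ∩ {ω | In n 0 ω = true})
            / Pn n {ω | In n 0 ω = true}) atTop
        (nhds (P {ω | ∀ t ∈ F, I t ω = ε t})))
    (F : Finset ℤ) (ε : ℤ → Bool) (k : ℤ) :
    P {ω | (∀ t ∈ F, I t ω = ε t) ∧ I k ω = true}
      = P {ω | (∀ t ∈ F, I (t - k) ω = ε t) ∧ I (-k) ω = true} := by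
  have hP0 : P {ω | I 0 ω = true} = 1 := P0_eq_one P I Pn hPn In hpos hconv
  have hP0' : P {ω | I 0 ω = false} = 0 := by
    have hm : MeasurableSet {ω | I 0 ω = true} := by
      have : {ω | I 0 ω = true} = (I 0) ⁻¹' {true} := rfl
      rw [this]; exact (hI 0) (measurableSet_singleton true)
    have hcompl : {ω | I 0 ω = false} = {ω | I 0 ω = true}ᶜ := by
      ext ω; simp [Bool.not_eq_true]
    rw [hcompl, measure_compl hm (measure_ne_top _ _), hP0, measure_univ, tsub_self]
  by_cases hc2 : k ∈ F ∧ ε k = false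
  · have hL : {ω | (∀ t ∈ F, I t ω = ε t) ∧ I k ω = true} = ∅ := by
      ext ω
      simp only [mem_setOf_eq, mem_empty_iff_false, iff_false, not_and]
      intro h1 h2
      have := h1 k hc2.1
      rw [h2, hc2.2] at this
      exact Bool.true_eq_false.mp this
    have hsub : {ω | (∀ t ∈ F, I (t - k) ω = ε t) ∧ I (-k) ω = true} ⊆ {ω | I 0 ω = false} := by
      rintro ω ⟨h1, _⟩
      have := h1 k hc2.1
      rw [sub_self, hc2.2] at this
      exact this
    rw [hL, measure_empty]
    exact (measure_mono_null hsub hP0').symm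
  have hk : k ∈ F → ε k = true := by
    intro h
    rcases Bool.dichotomy (ε k) with hb | hb
    · exact absurd ⟨h, hb⟩ hc2
    · exact hb
  by_cases hc3 : 0 ∈ F ∧ ε 0 = false
  · have hsub : {ω | (∀ t ∈ F, I t ω = ε t) ∧ I k ω = true} ⊆ {ω | I 0 ω = false} := by
      rintro ω ⟨h1, _⟩
      have := h1 0 hc3.1
      rw [hc3.2] at this
      exact this
    have hR : {ω | (∀ t ∈ F, I (t - k) ω = ε t) ∧ I (-k) ω = true} = ∅ := by
      ext ω
      simp only [mem_setOf_eq, mem_empty_iff_false, iff_false, not_and]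
      intro h1 h2
      have := h1 0 hc3.1
      rw [zero_sub, h2, hc3.2] at this
      exact Bool.true_eq_false.mp this
    rw [hR, measure_empty]
    exact measure_mono_null hsub hP0'
  have h0 : 0 ∈ F → ε 0 = true := by
    intro h
    rcases Bool.dichotomy (ε 0) with hb | hb
    · exact absurd ⟨h, hb⟩ hc3
    · exact hb
  -- main case
  set G : Finset ℤ := insert k F with hG
  set η : ℤ → Bool := Function.update ε k true with hη
  set G' : Finset ℤ := insert (-k) (F.image (fun t => t - k)) with hG'
  set η' : ℤ → Bool := Function.update (fun s => ε (s + k)) (-k) true with hη'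
  -- rewrite LHS
  have hLrw : {ω | (∀ t ∈ F, I t ω = ε t) ∧ I k ω = true} = {ω | ∀ t ∈ G, I t ω = η t} :=
    pat_insert I F ε k hk
  -- rewrite RHS
  have hmemG' : -k ∈ F.image (fun t => t - k) → (fun s => ε (s + k)) (-k) = true := by
    intro hmem
    obtain ⟨t, htF, ht⟩ := Finset.mem_image.mp hmem
    have ht0 : t = 0 := by omega
    subst ht0
    show ε (-k + k) = true
    rw [show -k + k = (0 : ℤ) by omega]
    exact h0 htF
  have hRrw : {ω | (∀ t ∈ F, I (t - k) ω = ε t) ∧ I (-k) ω = true}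
      = {ω | ∀ s ∈ G', I s ω = η' s} := by
    have e1 : {ω | (∀ t ∈ F, I (t - k) ω = ε t) ∧ I (-k) ω = true}
        = {ω | (∀ s ∈ F.image (fun t => t - k), I s ω = ε (s + k)) ∧ I (-k) ω = true} := by
      ext ω
      simp only [mem_setOf_eq, Finset.forall_mem_image, sub_add_cancel]
    rw [e1]
    exact pat_insert I (F.image (fun t => t - k)) (fun s => ε (s + k)) (-k) hmemG'
  -- the two tendsto statements
  have hA := hconv G η
  have hB := hconv G' η'
  -- auxiliary facts for inserting 0
  have hη0 : 0 ∈ G → η 0 = true := by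
    intro h0G
    rcases eq_or_ne k 0 with rfl | hkne
    · exact Function.update_self _ _ _
    · have h0F : (0 : ℤ) ∈ F := by
        rcases Finset.mem_insert.mp h0G with h | h
        · exact absurd h.symm hkne
        · exact h
      rw [hη, Function.update_of_ne (Ne.symm hkne)]
      exact h0 h0F
  have hη'0 : 0 ∈ G' → η' 0 = true := by
    intro h
    by_cases hk0 : (0 : ℤ) = -k
    · rw [hk0]; exact Function.update_self _ _ _
    · have h2 := (Finset.mem_insert.mp h).resolve_left hk0
      obtain ⟨t, htF, ht⟩ := Finset.mem_image.mp h2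
      have htk : t = k := by omega
      have hkF : k ∈ F := htk ▸ htF
      rw [hη', Function.update_of_ne hk0]
      show ε (0 + k) = true
      rw [zero_add]
      exact hk hkF
  -- equality of the numerator sets after shifting
  have himg2 : (insert 0 G).image (fun t => t + -k) = insert 0 G' := by
    ext x
    simp only [Finset.mem_image, Finset.mem_insert, hG, hG']
    constructor
    · rintro ⟨t, ht, rfl⟩
      rcases ht with rfl | rfl | htF
      · right; left; omega
      · left; omega
      · right; right; exact ⟨t, htF, by omega⟩
    · rintro (rfl | rfl | ⟨t, htF, rfl⟩)
      · exact ⟨k, Or.inr (Or.inl rfl), by omega⟩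
      · exact ⟨0, Or.inl rfl, by omega⟩
      · exact ⟨t, Or.inr (Or.inr htF), by omega⟩
  have hfun : ∀ t ∈ insert 0 G, Function.update η' 0 true (t + -k) = Function.update η 0 true t := by
    intro t ht
    by_cases ht0 : t = 0
    · subst ht0
      rw [Function.update_self, zero_add]
      by_cases hkz : (-k : ℤ) = 0
      · rw [hkz]; exact Function.update_self _ _ _
      · rw [Function.update_of_ne hkz, hη']
        exact Function.update_self _ _ _
    · by_cases htk : t = k
      · have hk0 : k ≠ 0 := htk ▸ ht0
        rw [htk, show k + -k = (0:ℤ) from by omega, Function.update_self,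
            Function.update_of_ne hk0, hη, Function.update_self]
      · have h' := (Finset.mem_insert.mp ht).resolve_left ht0
        rw [hG] at h'
        have htF := (Finset.mem_insert.mp h').resolve_left htk
        have h1 : t + -k ≠ 0 := by omega
        have h2 : t + -k ≠ -k := by omega
        rw [Function.update_of_ne h1, Function.update_of_ne ht0, hη',
            Function.update_of_ne h2, hη, Function.update_of_ne htk]
        show ε (t + -k + k) = ε t
        rw [show t + -k + k = t from by omega]
  have hSeq : ∀ n, {ω | ∀ t ∈ insert 0 G, In n (t + -k) ω = Function.update η 0 true t}
      = {ω | ∀ s ∈ insert 0 G', In n s ω = Function.update η' 0 true s} := by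
    intro n; ext ω
    simp only [mem_setOf_eq]
    constructor
    · intro h s hs
      rw [← himg2] at hs
      obtain ⟨t, ht, rfl⟩ := Finset.mem_image.mp hs
      rw [hfun t ht]
      exact h t ht
    · intro h t ht
      rw [← hfun t ht]
      exact h (t + -k) (by rw [← himg2]; exact Finset.mem_image_of_mem _ ht)
  have hnum : ∀ n, Pn n ({ω | ∀ t ∈ G, In n t ω = η t} ∩ {ω | In n 0 ω = true})
      = Pn n ({ω | ∀ s ∈ G', In n s ω = η' s} ∩ {ω | In n 0 ω = true}) := by
    intro n
    have e1 : {ω | ∀ t ∈ G, In n t ω = η t} ∩ {ω | In n 0 ω = true}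
        = {ω | (∀ t ∈ G, In n t ω = η t) ∧ In n 0 ω = true} := rfl
    have e2 : {ω | ∀ s ∈ G', In n s ω = η' s} ∩ {ω | In n 0 ω = true}
        = {ω | (∀ s ∈ G', In n s ω = η' s) ∧ In n 0 ω = true} := rfl
    rw [e1, e2, pat_insert (In n) G η 0 hη0, pat_insert (In n) G' η' 0 hη'0,
        hstat n (insert 0 G) (Function.update η 0 true) (-k), hSeq n]
  have hfeq : (fun n => Pn n ({ω | ∀ t ∈ G, In n t ω = η t} ∩ {ω | In n 0 ω = true})
        / Pn n {ω | In n 0 ω = true})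
      = fun n => Pn n ({ω | ∀ s ∈ G', In n s ω = η' s} ∩ {ω | In n 0 ω = true})
        / Pn n {ω | In n 0 ω = true} := funext fun n => by rw [hnum n]
  rw [hLrw, hRrw]
  rw [hfeq] at hA
  exact tendsto_nhds_unique hA hB

end InfClusterAux

namespace InfClusterAux

lemma shift_measure_eq
    {Ω : Type*} [MeasurableSpace Ω] (P : Measure Ω) [IsProbabilityMeasure P]
    (I : ℤ → Ω → Bool) (hI : ∀ t, Measurable (I t))
    {Ωn : ℕ → Type*} [∀ n, MeasurableSpace (Ωn n)]
    (Pn : ∀ n, Measure (Ωn n)) (hPn : ∀ n, IsProbabilityMeasure (Pn n))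
    (In : ∀ n, ℤ → Ωn n → Bool)
    (hpos : ∀ n, 0 < Pn n {ω | In n 0 ω = true})
    (hstat : ∀ n (F : Finset ℤ) (ε : ℤ → Bool) (k : ℤ),
      Pn n {ω | ∀ t ∈ F, In n t ω = ε t} = Pn n {ω | ∀ t ∈ F, In n (t + k) ω = ε t})
    (hconv : ∀ (F : Finset ℤ) (ε : ℤ → Bool),
      Tendsto (fun n =>
          Pn n ({ω | ∀ t ∈ F, In n t ω = ε t} ∩ {ω | In n 0 ω = true})
            / Pn n {ω | In n 0 ω = true}) atTop
        (nhds (P {ω | ∀ t ∈ F, I t ω = ε t})))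
    (k : ℤ) :
    ((P.map (fun ω t => I t ω)).restrict {f : Path | f k = true})
      = (((P.map (fun ω t => I t ω)).restrict {f : Path | f (-k) = true}).map (shiftk k)) := by
  set X : Ω → Path := fun ω t => I t ω with hXdef
  have hXm : Measurable X := measurable_pi_lambda _ fun t => hI t
  set μ : Measure Path := P.map X with hμ
  haveI : IsProbabilityMeasure μ := Measure.isProbabilityMeasure_map hXm.aemeasurable
  have hcyl : ∀ (F : Finset ℤ) (ε : ℤ → Bool),
      (μ.restrict {f : Path | f k = true}) (patCyl F ε)
        = ((μ.restrict {f : Path | f (-k) = true}).map (shiftk k)) (patCyl F ε) := by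
    intro F ε
    rw [Measure.restrict_apply (measurableSet_patCyl F ε),
        Measure.map_apply (measurable_shiftk k) (measurableSet_patCyl F ε),
        Measure.restrict_apply ((measurable_shiftk k) (measurableSet_patCyl F ε)),
        hμ, Measure.map_apply hXm
          ((measurableSet_patCyl F ε).inter (measurableSet_coord k true)),
        Measure.map_apply hXm
          (((measurable_shiftk k) (measurableSet_patCyl F ε)).inter
            (measurableSet_coord (-k) true))]
    have e1 : X ⁻¹' (patCyl F ε ∩ {f : Path | f k = true})
        = {ω | (∀ t ∈ F, I t ω = ε t) ∧ I k ω = true} := rfl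
    have e2 : X ⁻¹' ((shiftk k ⁻¹' patCyl F ε) ∩ {f : Path | f (-k) = true})
        = {ω | (∀ t ∈ F, I (t - k) ω = ε t) ∧ I (-k) ω = true} := rfl
    rw [e1, e2]
    exact time_change P I hI Pn hPn In hpos hstat hconv F ε k
  refine ext_of_generate_finite Cyls generateFrom_Cyls isPiSystem_Cyls ?_ ?_
  · rintro s ⟨F, ε, rfl⟩
    exact hcyl F ε
  · have huniv : (Set.univ : Set Path) = patCyl ∅ (fun _ => true) := by
      ext f; simp [patCyl]
    rw [huniv]
    exact hcyl ∅ (fun _ => true)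

end InfClusterAux

namespace InfClusterAux

lemma key_plus
    {Ω : Type*} [MeasurableSpace Ω] (P : Measure Ω) [IsProbabilityMeasure P]
    (I : ℤ → Ω → Bool) (hI : ∀ t, Measurable (I t))
    {Ωn : ℕ → Type*} [∀ n, MeasurableSpace (Ωn n)]
    (Pn : ∀ n, Measure (Ωn n)) (hPn : ∀ n, IsProbabilityMeasure (Pn n))
    (In : ∀ n, ℤ → Ωn n → Bool)
    (hpos : ∀ n, 0 < Pn n {ω | In n 0 ω = true})
    (hstat : ∀ n (F : Finset ℤ) (ε : ℤ → Bool) (k : ℤ),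
      Pn n {ω | ∀ t ∈ F, In n t ω = ε t} = Pn n {ω | ∀ t ∈ F, In n (t + k) ω = ε t})
    (hconv : ∀ (F : Finset ℤ) (ε : ℤ → Bool),
      Tendsto (fun n =>
          Pn n ({ω | ∀ t ∈ F, In n t ω = ε t} ∩ {ω | In n 0 ω = true})
            / Pn n {ω | In n 0 ω = true}) atTop
        (nhds (P {ω | ∀ t ∈ F, I t ω = ε t}))) :
    P {ω | SiFn I ω = ⊤ ∧ SplusFn I ω ≠ ⊤} = 0 := by
  classical
  set X : Ω → Path := fun ω t => I t ω with hXdef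
  have hXm : Measurable X := measurable_pi_lambda _ fun t => hI t
  set μ : Measure Path := P.map X with hμ
  haveI : IsProbabilityMeasure μ := Measure.isProbabilityMeasure_map hXm.aemeasurable
  -- events
  set D : Set Path := {f | ∀ j : ℤ, 0 < j → f j = false} ∩ Einf with hD
  have hmhalf : ∀ c : ℤ, MeasurableSet {f : Path | ∀ j : ℤ, c < j → f j = false} := by
    intro c
    have : {f : Path | ∀ j : ℤ, c < j → f j = false}
        = ⋂ (j : ℤ), ⋂ (_ : c < j), {f : Path | f j = false} := by
      ext f; simp
    rw [this]
    exact MeasurableSet.iInter fun j => MeasurableSet.iInter fun _ => measurableSet_coord j false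
  have hmD : MeasurableSet D := (hmhalf 0).inter measurableSet_Einf
  set A : ℕ → Set Path := fun m => {f | ∀ j : ℤ, (m : ℤ) < j → f j = false} ∩ Einf with hA
  have hmA : ∀ m, MeasurableSet (A m) := fun m => (hmhalf m).inter measurableSet_Einf
  set C : ℕ → Set Path := fun m => A m ∩ {f : Path | f (m : ℤ) = true} with hC
  have hmC : ∀ m, MeasurableSet (C m) := fun m => (hmA m).inter (measurableSet_coord _ true)
  -- shift identity
  have hpre : ∀ m : ℕ, shiftk (m : ℤ) ⁻¹' A m = D := by
    intro m
    ext f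
    simp only [mem_preimage, hA, hD, mem_inter_iff, mem_setOf_eq, Einf]
    have himg : {t : ℤ | shiftk (m : ℤ) f t = true} = (fun t => t + (m : ℤ)) '' {t | f t = true} := by
      ext t
      simp only [shiftk, mem_setOf_eq, mem_image]
      constructor
      · intro h; exact ⟨t - m, h, by omega⟩
      · rintro ⟨s, hs, rfl⟩
        rw [show s + (m : ℤ) - m = s from by omega]
        exact hs
    constructor
    · rintro ⟨h1, h2⟩
      refine ⟨fun j hj => ?_, ?_⟩
      · have := h1 (j + m) (by omega)
        simp only [shiftk] at this
        rw [show (j + (m:ℤ)) - m = j from by omega] at this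
        exact this
      · rw [himg] at h2
        exact (Set.infinite_image_iff (fun a _ b _ h => by omega)).mp h2
    · rintro ⟨h1, h2⟩
      refine ⟨fun j hj => ?_, ?_⟩
      · show f (j - (m:ℤ)) = false
        exact h1 (j - m) (by omega)
      · rw [himg]
        exact Set.Infinite.image (fun a _ b _ h => by omega) h2
  have hshift : ∀ m : ℕ, μ (C m) = μ (D ∩ {f : Path | f (-(m : ℤ)) = true}) := by
    intro m
    have h := shift_measure_eq P I hI Pn hPn In hpos hstat hconv (m : ℤ)
    calc μ (C m) = (μ.restrict {f : Path | f (m : ℤ) = true}) (A m) := by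
          rw [Measure.restrict_apply (hmA m)]
      _ = ((μ.restrict {f : Path | f (-(m : ℤ)) = true}).map (shiftk (m : ℤ))) (A m) := by
          rw [h]
      _ = μ ((shiftk (m : ℤ) ⁻¹' A m) ∩ {f : Path | f (-(m : ℤ)) = true}) := by
          rw [Measure.map_apply (measurable_shiftk _) (hmA m),
            Measure.restrict_apply ((measurable_shiftk _) (hmA m))]
      _ = μ (D ∩ {f : Path | f (-(m : ℤ)) = true}) := by rw [hpre m]
  -- disjointness
  have haux : ∀ a b : ℕ, a < b → Disjoint (C a) (C b) := by
    intro a b h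
    rw [Set.disjoint_left]
    rintro f ⟨⟨hfa, _⟩, _⟩ ⟨_, hfb⟩
    have := hfa (b : ℤ) (by exact_mod_cast h)
    rw [mem_setOf_eq] at hfb
    rw [hfb] at this
    exact Bool.true_eq_false.mp this
  have hdisj : Pairwise (Function.onFun Disjoint C) := by
    intro a b hab
    rcases lt_or_gt_of_ne hab with h | h
    · exact haux a b h
    · exact (haux b a h).symm
  have hsum_le : ∑' m, μ (C m) ≤ 1 := by
    rw [← measure_iUnion hdisj hmC]
    exact prob_le_one
  -- lower bound
  have hlow : (⊤ : ℝ≥0∞) * μ D ≤ ∑' m : ℕ, μ (D ∩ {f : Path | f (-(m : ℤ)) = true}) := by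
    have hmDG : ∀ m : ℕ, MeasurableSet (D ∩ {f : Path | f (-(m : ℤ)) = true}) :=
      fun m => hmD.inter (measurableSet_coord _ true)
    have hstep : (⊤ : ℝ≥0∞) * μ D = ∫⁻ f, D.indicator (fun _ => (⊤ : ℝ≥0∞)) f ∂μ :=
      (lintegral_indicator_const hmD ⊤).symm
    rw [hstep]
    have hmono : ∀ f : Path, D.indicator (fun _ => (⊤ : ℝ≥0∞)) f
        ≤ ∑' m : ℕ, (D ∩ {f' : Path | f' (-(m : ℤ)) = true}).indicator 1 f := by
      intro f
      by_cases hf : f ∈ D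
      · set K : Set ℕ := {m : ℕ | f (-(m : ℤ)) = true} with hK
        have hKinf : K.Infinite := by
          intro hfin
          have hsub : {t : ℤ | f t = true} ⊆ (fun m : ℕ => -(m : ℤ)) '' K := by
            intro t ht
            have ht0 : t ≤ 0 := by
              by_contra hcon
              push_neg at hcon
              have := hf.1 t hcon
              rw [mem_setOf_eq] at ht
              rw [ht] at this
              exact Bool.true_eq_false.mp this
            refine ⟨t.natAbs, ?_, show -(t.natAbs : ℤ) = t from by omega⟩
            show f (-(t.natAbs : ℤ)) = true
            rw [show -(t.natAbs : ℤ) = t from by omega]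
            exact ht
          exact hf.2 (Set.Finite.subset (hfin.image _) hsub)
        have htop : ∑' m : ℕ, (D ∩ {f' : Path | f' (-(m : ℤ)) = true}).indicator
            (1 : Path → ℝ≥0∞) f = ⊤ := by
          have heach : ∀ m : ℕ, (D ∩ {f' : Path | f' (-(m : ℤ)) = true}).indicator
              (1 : Path → ℝ≥0∞) f = K.indicator (fun _ => (1 : ℝ≥0∞)) m := by
            intro m
            by_cases hm : f (-(m : ℤ)) = true
            · rw [Set.indicator_of_mem (Set.mem_inter hf hm),
                Set.indicator_of_mem (show m ∈ K from hm)]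
              rfl
            · rw [Set.indicator_of_notMem
                  (show f ∉ D ∩ {f' : Path | f' (-(m : ℤ)) = true} from fun hmem => hm hmem.2),
                Set.indicator_of_notMem (show m ∉ K from hm)]
          rw [tsum_congr heach, ← tsum_subtype]
          haveI : Infinite ↥K := Set.infinite_coe_iff.mpr hKinf
          exact ENNReal.tsum_const_eq_top_of_ne_zero one_ne_zero
        rw [Set.indicator_of_mem hf, htop]
      · rw [Set.indicator_of_notMem hf]
        exact zero_le'
    refine le_trans (lintegral_mono hmono) ?_
    rw [lintegral_tsum fun m => ((measurable_one.indicator (hmDG m)).aemeasurable)]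
    exact le_of_eq (tsum_congr fun m => lintegral_indicator_one (hmDG m))
  -- μ D = 0
  have hDzero : μ D = 0 := by
    by_contra hne
    have h1 : (⊤ : ℝ≥0∞) * μ D = ⊤ := ENNReal.top_mul hne
    have h2 : (⊤ : ℝ≥0∞) ≤ 1 := by
      rw [← h1]
      refine hlow.trans ?_
      rw [tsum_congr fun m => (hshift m).symm] at *
      exact (tsum_congr fun m => (hshift m).symm) ▸ hsum_le
    simp at h2
  have hCzero : μ (⋃ m, C m) = 0 :=
    measure_iUnion_null fun m =>
      le_antisymm ((hshift m).le.trans ((measure_mono inter_subset_left).trans hDzero.le))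
        (zero_le')
  -- f 0 = false is null
  have hP0 : P {ω | I 0 ω = true} = 1 := P0_eq_one P I Pn hPn In hpos hconv
  have hzero0 : μ {f : Path | f 0 = false} = 0 := by
    have htrue : μ {f : Path | f 0 = true} = 1 := by
      rw [hμ, Measure.map_apply hXm (measurableSet_coord 0 true)]
      exact hP0
    have hcompl : {f : Path | f 0 = false} = {f : Path | f 0 = true}ᶜ := by
      ext f; simp [Bool.not_eq_true]
    rw [hcompl, measure_compl (measurableSet_coord 0 true) (measure_ne_top _ _), htrue,
      measure_univ, tsub_self]
  -- inclusion
  have hincl : {f : Path | {t : ℤ | f t = true}.Infinite ∧ {t : ℤ | 0 < t ∧ f t = true}.Finite}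
      ⊆ (⋃ m, C m) ∪ {f : Path | f 0 = false} := by
    rintro f ⟨hinf, hfin⟩
    by_cases hf0 : f 0 = true
    · left
      set Q : Finset ℤ := insert 0 hfin.toFinset with hQ
      have hQne : Q.Nonempty := ⟨0, Finset.mem_insert_self _ _⟩
      set M := Q.max' hQne with hM
      have hM0 : 0 ≤ M := Q.le_max' 0 (Finset.mem_insert_self _ _)
      have hMt : (M.toNat : ℤ) = M := Int.toNat_of_nonneg hM0
      refine mem_iUnion.mpr ⟨M.toNat, ⟨⟨?_, hinf⟩, ?_⟩⟩
      · intro j hj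
        rw [hMt] at hj
        by_contra hcon
        have hjt : f j = true := by
          rcases Bool.dichotomy (f j) with h | h
          · exact absurd h hcon
          · exact h
        have hjQ : j ∈ Q :=
          Finset.mem_insert.mpr (Or.inr (hfin.mem_toFinset.mpr ⟨by omega, hjt⟩))
        have := Q.le_max' j hjQ
        omega
      · show f (M.toNat : ℤ) = true
        rw [hMt]
        have hMQ := Q.max'_mem hQne
        rcases Finset.mem_insert.mp hMQ with h | h
        · rw [hM, h]; exact hf0
        · exact (hfin.mem_toFinset.mp h).2
    · right
      show f 0 = false
      rcases Bool.dichotomy (f 0) with h | h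
      · exact h
      · exact absurd h hf0
  -- conclude
  have hmtarget : MeasurableSet {f : Path | {t : ℤ | f t = true}.Infinite
      ∧ {t : ℤ | 0 < t ∧ f t = true}.Finite} := by
    have : {f : Path | {t : ℤ | f t = true}.Infinite ∧ {t : ℤ | 0 < t ∧ f t = true}.Finite}
        = Einf ∩ {f : Path | {t : ℤ | 0 < t ∧ f t = true}.Finite} := rfl
    rw [this]
    exact measurableSet_Einf.inter (measurableSet_finiteOn _)
  have htarget : {ω | SiFn I ω = ⊤ ∧ SplusFn I ω ≠ ⊤}
      = X ⁻¹' {f : Path | {t : ℤ | f t = true}.Infinite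
          ∧ {t : ℤ | 0 < t ∧ f t = true}.Finite} := by
    ext ω
    simp only [mem_setOf_eq, mem_preimage, SiFn, SplusFn]
    rw [← Set.encard_eq_top_iff, ← Set.not_infinite, ← Set.encard_eq_top_iff]
  rw [htarget, ← Measure.map_apply hXm hmtarget, ← hμ]
  exact measure_mono_null hincl (measure_union_null hCzero hzero0)

end InfClusterAux

/-- Theorem 3.3(c): under Assumption 1, if `P(Sⁱ = ∞) > 0` then
`P(S₊ⁱ = ∞ | Sⁱ = ∞) = 1` and `P(S₋ⁱ = ∞ | Sⁱ = ∞) = 1`; equivalently,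
`P(Sⁱ = ∞, S₊ⁱ < ∞) = 0` and `P(Sⁱ = ∞, S₋ⁱ < ∞) = 0`. -/
theorem infinite_cluster_size
    {Ω : Type*} [MeasurableSpace Ω] (P : Measure Ω) [IsProbabilityMeasure P]
    (I : ℤ → Ω → Bool) (hI : ∀ t, Measurable (I t))
    {Ωn : ℕ → Type*} [∀ n, MeasurableSpace (Ωn n)]
    (Pn : ∀ n, Measure (Ωn n)) (hPn : ∀ n, IsProbabilityMeasure (Pn n))
    (In : ∀ n, ℤ → Ωn n → Bool) (hIn : ∀ n t, Measurable (In n t))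
    -- `P(I₀ⁿ = 1) > 0` for all `n`
    (hpos : ∀ n, 0 < Pn n {ω | In n 0 ω = true})
    -- stationarity of each `(Iₜⁿ)ₜ`
    (hstat : ∀ n (F : Finset ℤ) (ε : ℤ → Bool) (k : ℤ),
      Pn n {ω | ∀ t ∈ F, In n t ω = ε t} = Pn n {ω | ∀ t ∈ F, In n (t + k) ω = ε t})
    -- convergence of the conditional finite-dimensional distributions
    (hconv : ∀ (F : Finset ℤ) (ε : ℤ → Bool),
      Tendsto (fun n =>
          Pn n ({ω | ∀ t ∈ F, In n t ω = ε t} ∩ {ω | In n 0 ω = true})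
            / Pn n {ω | In n 0 ω = true}) atTop
        (nhds (P {ω | ∀ t ∈ F, I t ω = ε t})))

    (hinf : 0 < P {ω | SiFn I ω = ⊤}) :
    P ({ω | SplusFn I ω = ⊤} ∩ {ω | SiFn I ω = ⊤}) / P {ω | SiFn I ω = ⊤} = 1
    ∧ P ({ω | SminusFn I ω = ⊤} ∩ {ω | SiFn I ω = ⊤}) / P {ω | SiFn I ω = ⊤} = 1
    ∧ P {ω | SiFn I ω = ⊤ ∧ SplusFn I ω ≠ ⊤} = 0
    ∧ P {ω | SiFn I ω = ⊤ ∧ SminusFn I ω ≠ ⊤} = 0 := by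
  have hplus : P {ω | SiFn I ω = ⊤ ∧ SplusFn I ω ≠ ⊤} = 0 :=
    InfClusterAux.key_plus P I hI Pn hPn In hpos hstat hconv
  have hminus : P {ω | SiFn I ω = ⊤ ∧ SminusFn I ω ≠ ⊤} = 0 := by
    have h := InfClusterAux.key_plus P (fun t => I (-t)) (fun t => hI (-t)) Pn hPn
      (fun n t => In n (-t))
      (by
        intro n
        show 0 < Pn n {ω | In n (-(0:ℤ)) ω = true}
        simp only [neg_zero]
        exact hpos n)
      (by
        intro n F ε k
        show Pn n {ω | ∀ t ∈ F, In n (-t) ω = ε t}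
          = Pn n {ω | ∀ t ∈ F, In n (-(t + k)) ω = ε t}
        have hL : {ω | ∀ s ∈ F.image (fun t : ℤ => -t), In n s ω = ε (-s)}
            = {ω | ∀ t ∈ F, In n (-t) ω = ε t} := by
          ext ω; simp only [mem_setOf_eq, Finset.forall_mem_image, neg_neg]
        have hR : {ω | ∀ s ∈ F.image (fun t : ℤ => -t), In n (s + -k) ω = ε (-s)}
            = {ω | ∀ t ∈ F, In n (-(t + k)) ω = ε t} := by
          ext ω; simp only [mem_setOf_eq, Finset.forall_mem_image, neg_neg]
          constructor
          · intro hh t ht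
            have := hh ht
            rwa [show -t + -k = -(t + k) from by ring] at this
          · intro hh t ht
            have := hh t ht
            rwa [show -(t + k) = -t + -k from by ring] at this
        have h0 := hstat n (F.image (fun t : ℤ => -t)) (fun s => ε (-s)) (-k)
        rw [← hL, ← hR]
        convert h0 using 3)
      (by
        intro F ε
        have h0 := hconv (F.image (fun t : ℤ => -t)) (fun s => ε (-s))
        simp only [Finset.forall_mem_image, neg_neg] at h0
        show Tendsto (fun n => Pn n ({ω | ∀ t ∈ F, In n (-t) ω = ε t}
            ∩ {ω | In n (-(0:ℤ)) ω = true}) / Pn n {ω | In n (-(0:ℤ)) ω = true}) atTop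
          (nhds (P {ω | ∀ t ∈ F, I (-t) ω = ε t}))
        simp only [neg_zero]
        exact h0)
    have hset : {ω | SiFn (fun t => I (-t)) ω = ⊤ ∧ SplusFn (fun t => I (-t)) ω ≠ ⊤}
        = {ω | SiFn I ω = ⊤ ∧ SminusFn I ω ≠ ⊤} := by
      have h1 : ∀ ω, SiFn (fun t => I (-t)) ω = SiFn I ω := by
        intro ω
        simp only [SiFn]
        have e : {t : ℤ | I (-t) ω = true} = (fun t : ℤ => -t) '' {t : ℤ | I t ω = true} := by
          ext t
          simp only [mem_setOf_eq, mem_image]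
          constructor
          · intro h'; exact ⟨-t, h', neg_neg t⟩
          · rintro ⟨s, hs, rfl⟩; rwa [neg_neg]
        rw [e, (neg_injective : Function.Injective (fun t : ℤ => -t)).encard_image]
      have h2 : ∀ ω, SplusFn (fun t => I (-t)) ω = SminusFn I ω := by
        intro ω
        simp only [SplusFn, SminusFn]
        have e : {t : ℤ | 0 < t ∧ I (-t) ω = true}
            = (fun t : ℤ => -t) '' {t : ℤ | t < 0 ∧ I t ω = true} := by
          ext t
          simp only [mem_setOf_eq, mem_image]
          constructor
          · rintro ⟨ht, hIt⟩; exact ⟨-t, ⟨by omega, hIt⟩, neg_neg t⟩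
          · rintro ⟨s, ⟨hs, hIs⟩, rfl⟩
            refine ⟨by omega, ?_⟩
            rw [neg_neg]; exact hIs
        rw [e, (neg_injective : Function.Injective (fun t : ℤ => -t)).encard_image]
      ext ω
      rw [mem_setOf_eq, mem_setOf_eq, h1 ω, h2 ω]
    rw [← hset]
    exact h
  have hSine : P {ω | SiFn I ω = ⊤} ≠ 0 := hinf.ne'
  have hSint : P {ω | SiFn I ω = ⊤} ≠ ⊤ := measure_ne_top _ _
  have hpart : ∀ S : Set Ω, P ({ω | SiFn I ω = ⊤} \ S) = 0 →
      P (S ∩ {ω | SiFn I ω = ⊤}) / P {ω | SiFn I ω = ⊤} = 1 := by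
    intro S hzero
    have hsub : {ω | SiFn I ω = ⊤} ⊆ (S ∩ {ω | SiFn I ω = ⊤}) ∪ ({ω | SiFn I ω = ⊤} \ S) := by
      intro ω hω
      by_cases hS : ω ∈ S
      · exact Or.inl ⟨hS, hω⟩
      · exact Or.inr ⟨hω, hS⟩
    have hle : P {ω | SiFn I ω = ⊤} ≤ P (S ∩ {ω | SiFn I ω = ⊤}) := by
      calc P {ω | SiFn I ω = ⊤}
          ≤ P ((S ∩ {ω | SiFn I ω = ⊤}) ∪ ({ω | SiFn I ω = ⊤} \ S)) := measure_mono hsub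
        _ ≤ P (S ∩ {ω | SiFn I ω = ⊤}) + P ({ω | SiFn I ω = ⊤} \ S) := measure_union_le _ _
        _ = P (S ∩ {ω | SiFn I ω = ⊤}) := by rw [hzero, add_zero]
    have heq : P (S ∩ {ω | SiFn I ω = ⊤}) = P {ω | SiFn I ω = ⊤} :=
      le_antisymm (measure_mono inter_subset_right) hle
    rw [heq]
    exact ENNReal.div_self hSine hSint
  have hd1 : {ω | SiFn I ω = ⊤} \ {ω | SplusFn I ω = ⊤} = {ω | SiFn I ω = ⊤ ∧ SplusFn I ω ≠ ⊤} := by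
    ext ω; simp [mem_diff]
  have hd2 : {ω | SiFn I ω = ⊤} \ {ω | SminusFn I ω = ⊤} = {ω | SiFn I ω = ⊤ ∧ SminusFn I ω ≠ ⊤} := by
    ext ω; simp [mem_diff]
  exact ⟨hpart _ (by rw [hd1]; exact hplus), hpart _ (by rw [hd2]; exact hminus), hplus, hminus⟩
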